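/- Let T > 0 and let r, μ ∈ ℝ, σ ≠ 0, γ > 0 with γ ≠ 1, α ∉ {0,1} with α/(1−γ) > 0 and (1/α − 1)·(1−γ) ≥ 0, 0 < λ < 1, and ρ₁ ≥ ρ₂. Then there exist constants δ > 0 and κ > 0, depending only on r, μ, σ, ρ₁, ρ₂, γ, α, λ and T (and in particular independent of t₀), such that for every t₀ ∈ [0,T) and every positive solution (θ₁, θ₂) of the Epstein–Zin equilibrium ODE system (M-HJB) on [t₀,T], one has δ ≤ θᵢ(t) ≤ κ for i = 1, 2 and all t ∈ [t₀,T]. -/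

import Mathlib

noncomputable section

/-- `S(t) = λ θ₁(t) + (1-λ) θ₂(t)`. -/
def mhjbS (lam : ℝ) (θ₁ θ₂ : ℝ → ℝ) (t : ℝ) : ℝ :=
  lam * θ₁ t + (1 - lam) * θ₂ t

/-- `D(t) = λ θ₁(t)^β + (1-λ) θ₂(t)^β` with `β = (1-γ-α)/(1-γ)` (real powers). -/
def mhjbD (γ α lam : ℝ) (θ₁ θ₂ : ℝ → ℝ) (t : ℝ) : ℝ :=
  lam * θ₁ t ^ ((1 - γ - α) / (1 - γ)) + (1 - lam) * θ₂ t ^ ((1 - γ - α) / (1 - γ))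

/-- `C(t) = S(t)^{1/(α-1)} D(t)^{-1/(α-1)}` (real powers). -/
def mhjbC (γ α lam : ℝ) (θ₁ θ₂ : ℝ → ℝ) (t : ℝ) : ℝ :=
  mhjbS lam θ₁ θ₂ t ^ ((1 : ℝ) / (α - 1)) * mhjbD γ α lam θ₁ θ₂ t ^ (-((1 : ℝ) / (α - 1)))

/-- A positive solution of the Epstein–Zin equilibrium ODE system (M-HJB) on `[t₀, T]`:
differentiable positive functions `θ₁, θ₂` with continuous derivatives `θ₁', θ₂'` such that,
for `i = 1, 2` and all `t ∈ [t₀, T]`,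
`θᵢ'(t) + (1-γ)θᵢ(t)[r + (μ-r)²/(2γσ²) - C(t)] - (1-γ)ρᵢ α⁻¹ θᵢ(t)
  + α⁻¹(1-γ) θᵢ(t)^β S(t)^{α/(α-1)} D(t)^{-α/(α-1)} = 0`,
with terminal conditions `θ₁(T) = θ₂(T) = 1`. -/
def IsMHJBSolution (r μ σ ρ₁ ρ₂ γ α lam t₀ T : ℝ) (θ₁ θ₂ : ℝ → ℝ) : Prop :=
  ∃ θ₁' θ₂' : ℝ → ℝ,
    ContinuousOn θ₁' (Set.Icc t₀ T) ∧ ContinuousOn θ₂' (Set.Icc t₀ T) ∧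
    (∀ t ∈ Set.Icc t₀ T, HasDerivWithinAt θ₁ (θ₁' t) (Set.Icc t₀ T) t) ∧
    (∀ t ∈ Set.Icc t₀ T, HasDerivWithinAt θ₂ (θ₂' t) (Set.Icc t₀ T) t) ∧
    (∀ t ∈ Set.Icc t₀ T, 0 < θ₁ t) ∧ (∀ t ∈ Set.Icc t₀ T, 0 < θ₂ t) ∧
    θ₁ T = 1 ∧ θ₂ T = 1 ∧
    (∀ t ∈ Set.Icc t₀ T,
      θ₁' t
        + (1 - γ) * θ₁ t * (r + (μ - r) ^ 2 / (2 * γ * σ ^ 2) - mhjbC γ α lam θ₁ θ₂ t)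
        - (1 - γ) * ρ₁ * α⁻¹ * θ₁ t
        + α⁻¹ * (1 - γ) * θ₁ t ^ ((1 - γ - α) / (1 - γ))
          * mhjbS lam θ₁ θ₂ t ^ (α / (α - 1))
          * mhjbD γ α lam θ₁ θ₂ t ^ (-(α / (α - 1))) = 0) ∧
    (∀ t ∈ Set.Icc t₀ T,
      θ₂' t
        + (1 - γ) * θ₂ t * (r + (μ - r) ^ 2 / (2 * γ * σ ^ 2) - mhjbC γ α lam θ₁ θ₂ t)
        - (1 - γ) * ρ₂ * α⁻¹ * θ₂ t
        + α⁻¹ * (1 - γ) * θ₂ t ^ ((1 - γ - α) / (1 - γ))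
          * mhjbS lam θ₁ θ₂ t ^ (α / (α - 1))
          * mhjbD γ α lam θ₁ θ₂ t ^ (-(α / (α - 1))) = 0)

end

section helper

/-- Backward Grönwall: if `f' ≤ c f` on `[a,b]` then `f b * exp (c (t-b)) ≤ f t`. -/
lemma gron_le {f f' : ℝ → ℝ} {a b c : ℝ}
    (hd : ∀ t ∈ Set.Icc a b, HasDerivWithinAt f (f' t) (Set.Icc a b) t)
    (hle : ∀ t ∈ Set.Icc a b, f' t ≤ c * f t) :
    ∀ t ∈ Set.Icc a b, f b * Real.exp (c * (t - b)) ≤ f t := by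
  intro t ht
  have hb : b ∈ Set.Icc a b := ⟨ht.1.trans ht.2, le_refl b⟩
  have hcont : ContinuousOn f (Set.Icc a b) := fun s hs => (hd s hs).continuousWithinAt
  set g : ℝ → ℝ := fun s => f s * Real.exp (-(c * s)) with hg
  have hderiv : ∀ s ∈ interior (Set.Icc a b),
      HasDerivAt g (f' s * Real.exp (-(c * s)) + f s * (Real.exp (-(c * s)) * (-c))) s := by
    intro s hs
    rw [interior_Icc] at hs
    have h1 : HasDerivAt f (f' s) s :=
      (hd s (Set.Ioo_subset_Icc_self hs)).hasDerivAt (Icc_mem_nhds hs.1 hs.2)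
    have h2 : HasDerivAt (fun u : ℝ => -(c * u)) (-c) s := by
      simpa using ((hasDerivAt_id s).const_mul c).fun_neg
    exact h1.mul h2.exp
  have anti : AntitoneOn g (Set.Icc a b) := by
    apply antitoneOn_of_deriv_nonpos (convex_Icc a b)
    · exact hcont.mul (Real.continuous_exp.comp (by continuity)).continuousOn
    · intro s hs
      exact (hderiv s hs).differentiableAt.differentiableWithinAt
    · intro s hs
      rw [(hderiv s hs).deriv]
      have hsI : s ∈ Set.Icc a b := interior_subset hs
      have h3 := hle s hsI
      have hE : 0 < Real.exp (-(c * s)) := Real.exp_pos _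
      nlinarith
  have h3 : g b ≤ g t := anti ht hb ht.2
  have h4 := mul_le_mul_of_nonneg_right h3 (Real.exp_pos (c * t)).le
  calc f b * Real.exp (c * (t - b)) = f b * Real.exp (-(c * b)) * Real.exp (c * t) := by
        rw [mul_assoc, ← Real.exp_add]; congr 2; ring
    _ ≤ f t * Real.exp (-(c * t)) * Real.exp (c * t) := h4
    _ = f t := by rw [mul_assoc, ← Real.exp_add]; simp

/-- Backward Grönwall: if `c f ≤ f'` on `[a,b]` then `f t ≤ f b * exp (c (t-b))`. -/
lemma gron_ge {f f' : ℝ → ℝ} {a b c : ℝ}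
    (hd : ∀ t ∈ Set.Icc a b, HasDerivWithinAt f (f' t) (Set.Icc a b) t)
    (hle : ∀ t ∈ Set.Icc a b, c * f t ≤ f' t) :
    ∀ t ∈ Set.Icc a b, f t ≤ f b * Real.exp (c * (t - b)) := by
  intro t ht
  have hb : b ∈ Set.Icc a b := ⟨ht.1.trans ht.2, le_refl b⟩
  have hcont : ContinuousOn f (Set.Icc a b) := fun s hs => (hd s hs).continuousWithinAt
  set g : ℝ → ℝ := fun s => f s * Real.exp (-(c * s)) with hg
  have hderiv : ∀ s ∈ interior (Set.Icc a b),
      HasDerivAt g (f' s * Real.exp (-(c * s)) + f s * (Real.exp (-(c * s)) * (-c))) s := by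
    intro s hs
    rw [interior_Icc] at hs
    have h1 : HasDerivAt f (f' s) s :=
      (hd s (Set.Ioo_subset_Icc_self hs)).hasDerivAt (Icc_mem_nhds hs.1 hs.2)
    have h2 : HasDerivAt (fun u : ℝ => -(c * u)) (-c) s := by
      simpa using ((hasDerivAt_id s).const_mul c).fun_neg
    exact h1.mul h2.exp
  have mono : MonotoneOn g (Set.Icc a b) := by
    apply monotoneOn_of_deriv_nonneg (convex_Icc a b)
    · exact hcont.mul (Real.continuous_exp.comp (by continuity)).continuousOn
    · intro s hs
      exact (hderiv s hs).differentiableAt.differentiableWithinAt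
    · intro s hs
      rw [(hderiv s hs).deriv]
      have hsI : s ∈ Set.Icc a b := interior_subset hs
      have h3 := hle s hsI
      have hE : 0 < Real.exp (-(c * s)) := Real.exp_pos _
      nlinarith
  have h3 : g t ≤ g b := mono ht hb ht.2
  have h4 := mul_le_mul_of_nonneg_right h3 (Real.exp_pos (c * t)).le
  calc f t = f t * Real.exp (-(c * t)) * Real.exp (c * t) := by
        rw [mul_assoc, ← Real.exp_add]; simp
    _ ≤ f b * Real.exp (-(c * b)) * Real.exp (c * t) := h4
    _ = f b * Real.exp (c * (t - b)) := by
        rw [mul_assoc, ← Real.exp_add]; congr 2; ring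

/-- Sign lemma: if `f b = 0` and `f' ≥ -Λ f` wherever `f > 0`, then `f ≤ 0` on `[a,b]`. -/
lemma gron_sign {f f' : ℝ → ℝ} {a b Λ : ℝ}
    (hd : ∀ t ∈ Set.Icc a b, HasDerivWithinAt f (f' t) (Set.Icc a b) t)
    (hb : f b = 0)
    (hineq : ∀ t ∈ Set.Icc a b, 0 < f t → -Λ * f t ≤ f' t) :
    ∀ t ∈ Set.Icc a b, f t ≤ 0 := by
  intro t₂ ht₂
  by_contra hpos
  push_neg at hpos
  have hcont : ContinuousOn f (Set.Icc a b) := fun s hs => (hd s hs).continuousWithinAt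
  set Z : Set ℝ := {s ∈ Set.Icc t₂ b | f s ≤ 0} with hZ
  have hsub : Set.Icc t₂ b ⊆ Set.Icc a b := Set.Icc_subset_Icc ht₂.1 le_rfl
  have hZne : Z.Nonempty := ⟨b, ⟨⟨ht₂.2, le_rfl⟩, hb.le⟩⟩
  have hZclosed : IsClosed Z := by
    have hZeq : Z = Set.Icc t₂ b ∩ f ⁻¹' Set.Iic 0 := by
      ext s; simp [hZ, Set.mem_sep_iff, Set.mem_preimage]
    rw [hZeq]
    exact (hcont.mono hsub).preimage_isClosed_of_isClosed isClosed_Icc isClosed_Iic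
  have hbdd : BddBelow Z := ⟨t₂, fun s hs => hs.1.1⟩
  have ht₃Z : sInf Z ∈ Z := hZclosed.csInf_mem hZne hbdd
  set t₃ := sInf Z with ht₃
  have ht₃I : t₃ ∈ Set.Icc t₂ b := ht₃Z.1
  have hft₃ : f t₃ ≤ 0 := ht₃Z.2
  have h23 : t₂ < t₃ := lt_of_le_of_ne ht₃I.1 (by
    intro h; rw [← h] at hft₃; exact absurd hft₃ (not_le.mpr hpos))
  have hpos' : ∀ s ∈ Set.Ico t₂ t₃, 0 < f s := by
    intro s hs
    by_contra hns
    push_neg at hns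
    have hsZ : s ∈ Z := ⟨⟨hs.1, hs.2.le.trans ht₃I.2⟩, hns⟩
    exact absurd (csInf_le hbdd hsZ) (not_le.mpr hs.2)
  have hsub2 : Set.Icc t₂ t₃ ⊆ Set.Icc a b := Set.Icc_subset_Icc ht₂.1 ht₃I.2
  set u : ℝ → ℝ := fun s => f s * Real.exp (Λ * s) with hu
  have hderiv : ∀ s ∈ interior (Set.Icc t₂ t₃),
      HasDerivAt u (f' s * Real.exp (Λ * s) + f s * (Real.exp (Λ * s) * Λ)) s := by
    intro s hs
    rw [interior_Icc] at hs
    have hsab : s ∈ Set.Icc a b := hsub2 (Set.Ioo_subset_Icc_self hs)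
    have h1 : HasDerivAt f (f' s) s :=
      (hd s hsab).hasDerivAt (Icc_mem_nhds (lt_of_le_of_lt ht₂.1 hs.1) (lt_of_lt_of_le hs.2 ht₃I.2))
    have h2 : HasDerivAt (fun w : ℝ => Λ * w) Λ s := by
      simpa using (hasDerivAt_id s).const_mul Λ
    exact h1.mul h2.exp
  have mono : MonotoneOn u (Set.Icc t₂ t₃) := by
    apply monotoneOn_of_deriv_nonneg (convex_Icc t₂ t₃)
    · exact (hcont.mono hsub2).mul (Real.continuous_exp.comp (by continuity)).continuousOn
    · intro s hs
      exact (hderiv s hs).differentiableAt.differentiableWithinAt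
    · intro s hs
      rw [(hderiv s hs).deriv]
      have hsIoo : s ∈ Set.Ioo t₂ t₃ := by rwa [interior_Icc] at hs
      have hfs : 0 < f s := hpos' s ⟨hsIoo.1.le, hsIoo.2⟩
      have h3 := hineq s (hsub2 (Set.Ioo_subset_Icc_self hsIoo)) hfs
      have hE : 0 < Real.exp (Λ * s) := Real.exp_pos _
      nlinarith
  have h5 : u t₂ ≤ u t₃ := mono ⟨le_rfl, h23.le⟩ ⟨h23.le, le_rfl⟩ h23.le
  have h6 : 0 < u t₂ := mul_pos hpos (Real.exp_pos _)
  have h7 : u t₃ ≤ 0 := mul_nonpos_of_nonpos_of_nonneg hft₃ (Real.exp_pos _).le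
  linarith

/-- Mean value bound for real powers: for `0 < m ≤ y ≤ x` and `p ≤ 1`,
`x^p - y^p ≤ |p| m^(p-1) (x-y)`. -/
lemma rpow_sub_le_aux {m y x p : ℝ} (hm : 0 < m) (hmy : m ≤ y) (hyx : y ≤ x) (hp : p ≤ 1) :
    x ^ p - y ^ p ≤ |p| * m ^ (p - 1) * (x - y) := by
  rcases eq_or_lt_of_le hyx with rfl | hlt
  · simp
  · have hy : 0 < y := hm.trans_le hmy
    have hcont : ContinuousOn (fun w : ℝ => w ^ p) (Set.Icc y x) := by
      apply ContinuousOn.rpow_const continuousOn_id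
      intro z hz; exact Or.inl (ne_of_gt (hy.trans_le hz.1))
    obtain ⟨c, hc, hceq⟩ := exists_hasDerivAt_eq_slope (fun w : ℝ => w ^ p)
      (fun z => p * z ^ (p - 1)) hlt hcont
      (fun z hz => Real.hasDerivAt_rpow_const (Or.inl (ne_of_gt (hy.trans hz.1))))
    have hcpos : 0 < c := hy.trans hc.1
    have hmc : c ^ (p - 1) ≤ m ^ (p - 1) :=
      Real.rpow_le_rpow_of_nonpos hm (hmy.trans hc.1.le) (by linarith)
    have hxy : 0 < x - y := sub_pos.mpr hlt
    rw [eq_div_iff (ne_of_gt hxy)] at hceq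
    have h1 : p * c ^ (p - 1) ≤ |p| * c ^ (p - 1) :=
      mul_le_mul_of_nonneg_right (le_abs_self p) (Real.rpow_pos_of_pos hcpos _).le
    have h2 : |p| * c ^ (p - 1) ≤ |p| * m ^ (p - 1) :=
      mul_le_mul_of_nonneg_left hmc (abs_nonneg p)
    nlinarith [mul_le_mul_of_nonneg_right (h1.trans h2) hxy.le]

noncomputable def mhjbK (r μ σ γ : ℝ) : ℝ := r + (μ - r) ^ 2 / (2 * γ * σ ^ 2)
noncomputable def mhjbBeta (γ α : ℝ) : ℝ := (1 - γ - α) / (1 - γ)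
noncomputable def mhjbc1 (r μ σ ρ₁ γ α : ℝ) : ℝ := (1 - γ) * (ρ₁ * α⁻¹ - mhjbK r μ σ γ)
noncomputable def mhjbDel (r μ σ ρ₁ γ α T : ℝ) : ℝ :=
  Real.exp (-(|mhjbc1 r μ σ ρ₁ γ α| * T))
noncomputable def mhjbCmax (r μ σ ρ₁ γ α T : ℝ) : ℝ :=
  mhjbDel r μ σ ρ₁ γ α T ^ ((1 - mhjbBeta γ α) * ((1 : ℝ) / (α - 1)))
noncomputable def mhjbc4 (r μ σ ρ₁ ρ₂ γ α T : ℝ) : ℝ :=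
  (1 - γ) * (ρ₂ * α⁻¹ - mhjbK r μ σ γ) + (1 - γ) * (1 - α⁻¹) * mhjbCmax r μ σ ρ₁ γ α T
noncomputable def mhjbKap (r μ σ ρ₁ ρ₂ γ α T : ℝ) : ℝ :=
  Real.exp (|mhjbc4 r μ σ ρ₁ ρ₂ γ α T| * T)

end helper


set_option maxHeartbeats 1000000 in
/-- Proposition of Section 5.2, uniform a priori bound: there exist constants
`δ, κ > 0`, independent of the initial time `t₀`, such that every positive
solution of (M-HJB) on `[t₀, T]` satisfies `δ ≤ θᵢ ≤ κ` on `[t₀, T]`. -/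
theorem statement10 (r μ σ ρ₁ ρ₂ γ α lam T : ℝ) (hT : 0 < T)
    (hσ : σ ≠ 0) (hγ : 0 < γ) (hγ1 : γ ≠ 1) (hα0 : α ≠ 0) (hα1 : α ≠ 1)
    (hαγ : 0 < α / (1 - γ)) (hsgn : 0 ≤ (1 / α - 1) * (1 - γ))
    (hl0 : 0 < lam) (hl1 : lam < 1) (hρ : ρ₂ ≤ ρ₁) :
    ∃ δ > (0 : ℝ), ∃ κ > (0 : ℝ),
      ∀ t₀ : ℝ, 0 ≤ t₀ → t₀ < T →
      ∀ θ₁ θ₂ : ℝ → ℝ, IsMHJBSolution r μ σ ρ₁ ρ₂ γ α lam t₀ T θ₁ θ₂ →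
      ∀ t ∈ Set.Icc t₀ T,
        (δ ≤ θ₁ t ∧ θ₁ t ≤ κ) ∧ (δ ≤ θ₂ t ∧ θ₂ t ≤ κ) := by
  -- basic sign facts
  have h1γ : (1:ℝ) - γ ≠ 0 := sub_ne_zero.mpr (fun h => hγ1 h.symm)
  have hA0 : 0 < (1 - γ) * α⁻¹ := by
    rcases div_pos_iff.mp hαγ with ⟨h1, h2⟩ | ⟨h1, h2⟩
    · exact mul_pos h2 (inv_pos.mpr h1)
    · exact mul_pos_of_neg_of_neg h2 (inv_lt_zero.mpr h1)
  have hαlt1 : α < 1 := by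
    by_contra hcon
    push_neg at hcon
    have h1 : 1 < α := lt_of_le_of_ne hcon (fun h => hα1 h.symm)
    have h2 : 1 / α < 1 := by rw [div_lt_one (by linarith)]; exact h1
    have h3 : 1 - γ < 0 := by
      rcases lt_trichotomy ((1:ℝ) - γ) 0 with h | h | h
      · exact h
      · exact absurd h h1γ
      · nlinarith
    have h4 : α / (1 - γ) < 0 := div_neg_of_pos_of_neg (by linarith) h3
    linarith
  have hα1ne : α - 1 ≠ 0 := sub_ne_zero.mpr hα1
  have hkey : (1 - γ) * (1 - α⁻¹) ≤ 0 := by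
    have h2 : (1 - γ) * (1 - α⁻¹) = -((1 / α - 1) * (1 - γ)) := by field_simp; ring
    linarith
  have hβlt : (1 - γ - α) / (1 - γ) < 1 := by
    have hβeq : (1 - γ - α) / (1 - γ) = 1 - α / (1 - γ) := by field_simp
    rw [hβeq]; linarith
  have hppneg : (1 : ℝ) / (α - 1) < 0 := div_neg_of_pos_of_neg one_pos (by linarith)
  refine ⟨mhjbDel r μ σ ρ₁ γ α T, Real.exp_pos _, mhjbKap r μ σ ρ₁ ρ₂ γ α T,
    Real.exp_pos _, ?_⟩
  intro t₀ ht₀ ht₀T θ₁ θ₂ hsol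
  obtain ⟨θ₁', θ₂', hc1, hc2, hd1, hd2, hposa, hposb, hT1, hT2, hode1, hode2⟩ := hsol
  have hTI : T ∈ Set.Icc t₀ T := ⟨ht₀T.le, le_rfl⟩
  obtain ⟨B, hB⟩ : ∃ x : ℝ, x = (1 - γ - α) / (1 - γ) := ⟨_, rfl⟩
  obtain ⟨K, hK⟩ : ∃ x : ℝ, x = r + (μ - r) ^ 2 / (2 * γ * σ ^ 2) := ⟨_, rfl⟩
  rw [← hB, ← hK] at hode1 hode2
  set Sf := mhjbS lam θ₁ θ₂ with hSf
  set Df := mhjbD γ α lam θ₁ θ₂ with hDf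
  set Cf := mhjbC γ α lam θ₁ θ₂ with hCf
  have hSval : ∀ s, Sf s = lam * θ₁ s + (1 - lam) * θ₂ s := fun s => rfl
  have hDval : ∀ s, Df s = lam * θ₁ s ^ B + (1 - lam) * θ₂ s ^ B := by
    intro s; rw [hB]; rfl
  have hCval : ∀ s, Cf s = Sf s ^ ((1:ℝ)/(α-1)) * Df s ^ (-((1:ℝ)/(α-1))) := fun s => rfl
  have hBlt1 : B < 1 := by rw [hB]; exact hβlt
  have hBm1 : B - 1 < 0 := by linarith
  -- positivity
  have hSpos : ∀ s ∈ Set.Icc t₀ T, 0 < Sf s := fun s hs => by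
    rw [hSval s]
    have h1 := hposa s hs; have h2 := hposb s hs
    linarith [mul_pos hl0 h1, mul_pos (by linarith : (0:ℝ) < 1 - lam) h2]
  have hDpos : ∀ s ∈ Set.Icc t₀ T, 0 < Df s := fun s hs => by
    rw [hDval s]
    have h1 := Real.rpow_pos_of_pos (hposa s hs) B
    have h2 := Real.rpow_pos_of_pos (hposb s hs) B
    linarith [mul_pos hl0 h1, mul_pos (by linarith : (0:ℝ) < 1 - lam) h2]
  have hCpos : ∀ s ∈ Set.Icc t₀ T, 0 < Cf s := fun s hs => by
    rw [hCval s]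
    exact mul_pos (Real.rpow_pos_of_pos (hSpos s hs) _) (Real.rpow_pos_of_pos (hDpos s hs) _)
  -- continuity
  have hθ₁c : ContinuousOn θ₁ (Set.Icc t₀ T) := fun s hs => (hd1 s hs).continuousWithinAt
  have hθ₂c : ContinuousOn θ₂ (Set.Icc t₀ T) := fun s hs => (hd2 s hs).continuousWithinAt
  have hScont : ContinuousOn Sf (Set.Icc t₀ T) := by
    show ContinuousOn (fun s => lam * θ₁ s + (1 - lam) * θ₂ s) (Set.Icc t₀ T)
    exact (continuousOn_const.mul hθ₁c).add (continuousOn_const.mul hθ₂c)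
  have hDcont : ContinuousOn Df (Set.Icc t₀ T) := by
    have : ∀ s ∈ Set.Icc t₀ T, Df s = (fun u => lam * θ₁ u ^ B + (1 - lam) * θ₂ u ^ B) s :=
      fun s _ => hDval s
    refine ContinuousOn.congr ?_ this
    exact (continuousOn_const.mul (hθ₁c.rpow_const fun s hs => Or.inl (hposa s hs).ne')).add
      (continuousOn_const.mul (hθ₂c.rpow_const fun s hs => Or.inl (hposb s hs).ne'))
  have hCcont : ContinuousOn Cf (Set.Icc t₀ T) := by
    have : ∀ s ∈ Set.Icc t₀ T,
        Cf s = (fun u => Sf u ^ ((1:ℝ)/(α-1)) * Df u ^ (-((1:ℝ)/(α-1)))) s :=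
      fun s _ => hCval s
    refine ContinuousOn.congr ?_ this
    exact (hScont.rpow_const fun s hs => Or.inl (hSpos s hs).ne').mul
      (hDcont.rpow_const fun s hs => Or.inl (hDpos s hs).ne')
  -- the product identity: S^{α/(α-1)} D^{-α/(α-1)} = (S/D) * C
  have hSD : ∀ s ∈ Set.Icc t₀ T,
      Sf s ^ (α/(α-1)) * Df s ^ (-(α/(α-1))) = Sf s / Df s * Cf s := by
    intro s hs
    have hS := hSpos s hs; have hD := hDpos s hs
    have ha : α/(α-1) = 1 + 1/(α-1) := by field_simp; ring
    rw [hCval s, ha, Real.rpow_add hS, Real.rpow_one, neg_add, Real.rpow_add hD,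
      show (-1 : ℝ) = ((-1 : ℝ) : ℝ) from rfl, Real.rpow_neg_one, div_eq_mul_inv]
    ring
  -- rearranged ODEs
  have hode1' : ∀ s ∈ Set.Icc t₀ T,
      θ₁' s = (1 - γ) * (ρ₁ * α⁻¹ - K) * θ₁ s
        + Cf s * ((1 - γ) * (θ₁ s - α⁻¹ * (θ₁ s ^ B * (Sf s / Df s)))) := by
    intro s hs
    have h := hode1 s hs
    have key := hSD s hs
    linear_combination h - α⁻¹ * (1 - γ) * θ₁ s ^ B * key
  have hode2' : ∀ s ∈ Set.Icc t₀ T,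
      θ₂' s = (1 - γ) * (ρ₂ * α⁻¹ - K) * θ₂ s
        + Cf s * ((1 - γ) * (θ₂ s - α⁻¹ * (θ₂ s ^ B * (Sf s / Df s)))) := by
    intro s hs
    have h := hode2 s hs
    have key := hSD s hs
    linear_combination h - α⁻¹ * (1 - γ) * θ₂ s ^ B * key
  -- minimum of θ₂ on the compact interval
  obtain ⟨s₀, hs₀I, hs₀min⟩ := isCompact_Icc.exists_isMinOn ⟨T, hTI⟩ hθ₂c
  obtain ⟨m₀, hm₀def⟩ : ∃ x : ℝ, x = θ₂ s₀ := ⟨_, rfl⟩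
  have hm₀pos : 0 < m₀ := hm₀def ▸ hposb s₀ hs₀I
  have hm₀le : ∀ s ∈ Set.Icc t₀ T, m₀ ≤ θ₂ s := fun s hs => hm₀def ▸ isMinOn_iff.mp hs₀min s hs
  -- bounds for the coefficient functions
  obtain ⟨B₁, hB₁⟩ := isCompact_Icc.exists_bound_of_continuousOn
    (f := fun s => (1 - γ) * (Cf s - K))
    (continuousOn_const.mul (hCcont.sub continuousOn_const))
  obtain ⟨B₃, hB₃⟩ := isCompact_Icc.exists_bound_of_continuousOn
    (f := fun s => (1 - γ) * α⁻¹ * (Cf s * (Sf s / Df s)) * (|B| * m₀ ^ (B - 1)))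
    ((continuousOn_const.mul (hCcont.mul
      (hScont.div hDcont fun s hs => (hDpos s hs).ne'))).mul continuousOn_const)
  obtain ⟨Λ, hΛ⟩ : ∃ x : ℝ, x = B₁ + |(1 - γ) * α⁻¹ * ρ₂| + B₃ := ⟨_, rfl⟩
  -- ordering θ₁ ≤ θ₂
  have hord : ∀ s ∈ Set.Icc t₀ T, θ₁ s ≤ θ₂ s := by
    have hfd : ∀ s ∈ Set.Icc t₀ T,
        HasDerivWithinAt (fun u => θ₁ u - θ₂ u) ((fun u => θ₁' u - θ₂' u) s)
          (Set.Icc t₀ T) s := fun s hs => (hd1 s hs).sub (hd2 s hs)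
    have hfb : θ₁ T - θ₂ T = 0 := by rw [hT1, hT2]; ring
    have hineq : ∀ s ∈ Set.Icc t₀ T, 0 < θ₁ s - θ₂ s →
        -Λ * (θ₁ s - θ₂ s) ≤ (fun u => θ₁' u - θ₂' u) s := by
      intro s hs hfs
      show -Λ * (θ₁ s - θ₂ s) ≤ θ₁' s - θ₂' s
      have e1 := hode1' s hs
      have e2 := hode2' s hs
      have hx := hposa s hs
      have hy := hposb s hs
      have hS := hSpos s hs
      have hD := hDpos s hs
      have hC := hCpos s hs
      have hyx : θ₂ s ≤ θ₁ s := by linarith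
      have hsubB : θ₁ s ^ B - θ₂ s ^ B ≤ |B| * m₀ ^ (B - 1) * (θ₁ s - θ₂ s) :=
        rpow_sub_le_aux hm₀pos (hm₀le s hs) hyx hBlt1.le
      have hb1 := hB₁ s hs
      simp only [Real.norm_eq_abs] at hb1
      have t1 : -B₁ * (θ₁ s - θ₂ s) ≤ (1 - γ) * (Cf s - K) * (θ₁ s - θ₂ s) := by
        have h7 := abs_le.mp hb1
        exact mul_le_mul_of_nonneg_right (by linarith [h7.1]) hfs.le
      have t2 : -|(1 - γ) * α⁻¹ * ρ₂| * (θ₁ s - θ₂ s)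
          ≤ (1 - γ) * α⁻¹ * (ρ₁ * θ₁ s - ρ₂ * θ₂ s) := by
        have h8 := mul_le_mul_of_nonneg_right (neg_abs_le ((1 - γ) * α⁻¹ * ρ₂)) hfs.le
        have h9 : 0 ≤ (1 - γ) * α⁻¹ * ((ρ₁ - ρ₂) * θ₁ s) :=
          mul_nonneg hA0.le (mul_nonneg (by linarith) hx.le)
        linarith [h8, h9]
      have hb3 := hB₃ s hs
      simp only [Real.norm_eq_abs] at hb3
      have hc₃ : 0 ≤ (1 - γ) * α⁻¹ * (Cf s * (Sf s / Df s)) :=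
        mul_nonneg hA0.le (mul_nonneg hC.le (div_nonneg hS.le hD.le))
      have t3 : -B₃ * (θ₁ s - θ₂ s)
          ≤ -((1 - γ) * α⁻¹ * (Cf s * (Sf s / Df s)) * (θ₁ s ^ B - θ₂ s ^ B)) := by
        have h10 := mul_le_mul_of_nonneg_left hsubB hc₃
        have h11 : (1 - γ) * α⁻¹ * (Cf s * (Sf s / Df s)) * (|B| * m₀ ^ (B - 1)) * (θ₁ s - θ₂ s)
            ≤ B₃ * (θ₁ s - θ₂ s) :=
          mul_le_mul_of_nonneg_right (le_of_abs_le hb3) hfs.le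
        linarith [h10, h11]
      have e : θ₁' s - θ₂' s
          = (1 - γ) * (Cf s - K) * (θ₁ s - θ₂ s)
            + (1 - γ) * α⁻¹ * (ρ₁ * θ₁ s - ρ₂ * θ₂ s)
            - (1 - γ) * α⁻¹ * (Cf s * (Sf s / Df s)) * (θ₁ s ^ B - θ₂ s ^ B) := by
        rw [e1, e2]; ring
      rw [hΛ]
      linarith [t1, t2, t3, e]
    intro s hs
    have h30 : θ₁ s - θ₂ s ≤ 0 := gron_sign hfd hfb hineq s hs
    linarith
  -- key pointwise inequalities
  have hkey12 : ∀ s ∈ Set.Icc t₀ T, Df s * θ₁ s ≤ θ₁ s ^ B * Sf s ∧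
      θ₂ s ^ B * Sf s ≤ Df s * θ₂ s := by
    intro s hs
    have hx := hposa s hs
    have hy := hposb s hs
    have hxy := hord s hs
    have hb1 : θ₂ s ^ (B - 1) ≤ θ₁ s ^ (B - 1) :=
      Real.rpow_le_rpow_of_nonpos hx hxy (by linarith)
    have e1 : θ₂ s ^ B = θ₂ s ^ (B - 1) * θ₂ s := by
      rw [← Real.rpow_add_one hy.ne' (B - 1)]; congr 1; ring
    have e2 : θ₁ s ^ B = θ₁ s ^ (B - 1) * θ₁ s := by
      rw [← Real.rpow_add_one hx.ne' (B - 1)]; congr 1; ring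
    have h5 : θ₂ s ^ B * θ₁ s ≤ θ₁ s ^ B * θ₂ s := by
      rw [e1, e2]
      linarith [mul_le_mul_of_nonneg_right hb1 (mul_pos hx hy).le]
    constructor
    · rw [hDval s, hSval s]
      linarith [mul_le_mul_of_nonneg_left h5 (by linarith : (0:ℝ) ≤ 1 - lam)]
    · rw [hDval s, hSval s]
      linarith [mul_le_mul_of_nonneg_left h5 hl0.le]
  -- lower bound for θ₁
  obtain ⟨c₁, hc₁⟩ : ∃ x : ℝ, x = (1 - γ) * (ρ₁ * α⁻¹ - K) := ⟨_, rfl⟩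
  have hc₁val : mhjbc1 r μ σ ρ₁ γ α = c₁ := by rw [hc₁, hK]; rfl
  have hlow1 : ∀ s ∈ Set.Icc t₀ T, θ₁' s ≤ c₁ * θ₁ s := by
    intro s hs
    rw [hode1' s hs, hc₁]
    have hx := hposa s hs
    have hD := hDpos s hs
    have hC := hCpos s hs
    have hratio : θ₁ s ≤ θ₁ s ^ B * (Sf s / Df s) := by
      rw [← mul_div_assoc, le_div_iff₀ hD]
      linarith [(hkey12 s hs).1]
    have h6 := mul_le_mul_of_nonneg_left hratio hA0.le
    have h7 : (1 - γ) * (1 - α⁻¹) * θ₁ s ≤ 0 := by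
      linarith [mul_nonneg (neg_nonneg.mpr hkey) hx.le]
    have h8 : (1 - γ) * (θ₁ s - α⁻¹ * (θ₁ s ^ B * (Sf s / Df s))) ≤ 0 := by
      linarith [h6, h7]
    linarith [mul_le_mul_of_nonneg_left h8 hC.le]
  have hδpos : (0:ℝ) < mhjbDel r μ σ ρ₁ γ α T := Real.exp_pos _
  have hθ₁low : ∀ s ∈ Set.Icc t₀ T, mhjbDel r μ σ ρ₁ γ α T ≤ θ₁ s := by
    intro s hs
    have h9 := gron_le hd1 hlow1 s hs
    rw [hT1, one_mul] at h9
    have habs : |c₁ * (s - T)| ≤ |c₁| * T := by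
      rw [abs_mul]
      apply mul_le_mul_of_nonneg_left _ (abs_nonneg c₁)
      rw [abs_of_nonpos (by linarith [hs.2] : s - T ≤ 0)]
      linarith [hs.1, ht₀]
    have h10 : -(|c₁| * T) ≤ c₁ * (s - T) := by
      have h11 := neg_abs_le (c₁ * (s - T)); linarith
    calc mhjbDel r μ σ ρ₁ γ α T = Real.exp (-(|c₁| * T)) := by
          unfold mhjbDel; rw [hc₁val]
      _ ≤ Real.exp (c₁ * (s - T)) := Real.exp_le_exp.mpr h10
      _ ≤ θ₁ s := h9
  -- upper bound on C
  obtain ⟨CM, hCM⟩ : ∃ x : ℝ, x = mhjbCmax r μ σ ρ₁ γ α T := ⟨_, rfl⟩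
  have hCMval : CM = mhjbDel r μ σ ρ₁ γ α T ^ ((1 - B) * ((1:ℝ)/(α-1))) := by
    rw [hCM, hB]; rfl
  have hCle : ∀ s ∈ Set.Icc t₀ T, Cf s ≤ CM := by
    intro s hs
    have hx := hposa s hs
    have hS := hSpos s hs
    have hD := hDpos s hs
    have e3 : θ₁ s ^ (1 - B) * θ₁ s ^ B = θ₁ s := by
      rw [← Real.rpow_add hx, show (1 - B) + B = 1 by ring, Real.rpow_one]
    have h11 := mul_le_mul_of_nonneg_left ((hkey12 s hs).1)
      (Real.rpow_pos_of_pos hx (1 - B)).le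
    have e4 : θ₁ s ^ (1 - B) * (θ₁ s ^ B * Sf s) = θ₁ s * Sf s := by
      rw [← mul_assoc, e3]
    have h13 : θ₁ s ^ (1 - B) * Df s * θ₁ s ≤ Sf s * θ₁ s := by linarith [h11, e4]
    have h14 : θ₁ s ^ (1 - B) ≤ Sf s / Df s := by
      rw [le_div_iff₀ hD]
      exact le_of_mul_le_mul_right (by linarith [h13]) hx
    have h15 : mhjbDel r μ σ ρ₁ γ α T ^ (1 - B) ≤ Sf s / Df s :=
      le_trans (Real.rpow_le_rpow hδpos.le (hθ₁low s hs) (by linarith)) h14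
    have h16 : Cf s = (Sf s / Df s) ^ ((1:ℝ)/(α-1)) := by
      rw [hCval s, Real.rpow_neg hD.le, ← div_eq_mul_inv, ← Real.div_rpow hS.le hD.le]
    rw [h16, hCMval]
    have h17 : (Sf s / Df s) ^ ((1:ℝ)/(α-1))
        ≤ (mhjbDel r μ σ ρ₁ γ α T ^ (1 - B)) ^ ((1:ℝ)/(α-1)) :=
      Real.rpow_le_rpow_of_nonpos (Real.rpow_pos_of_pos hδpos _) h15 hppneg.le
    rw [← Real.rpow_mul hδpos.le] at h17
    exact h17
  -- upper bound for θ₂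
  obtain ⟨c₄, hc₄⟩ : ∃ x : ℝ, x = (1 - γ) * (ρ₂ * α⁻¹ - K) + (1 - γ) * (1 - α⁻¹) * CM :=
    ⟨_, rfl⟩
  have hc₄val : mhjbc4 r μ σ ρ₁ ρ₂ γ α T = c₄ := by rw [hc₄, hK, hCM]; rfl
  have hup2 : ∀ s ∈ Set.Icc t₀ T, c₄ * θ₂ s ≤ θ₂' s := by
    intro s hs
    rw [hode2' s hs, hc₄]
    have hy := hposb s hs
    have hD := hDpos s hs
    have hC := hCpos s hs
    have hratio2 : θ₂ s ^ B * (Sf s / Df s) ≤ θ₂ s := by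
      rw [← mul_div_assoc, div_le_iff₀ hD]
      linarith [(hkey12 s hs).2]
    have h6 := mul_le_mul_of_nonneg_left hratio2 hA0.le
    have h18 : (1 - γ) * (1 - α⁻¹) * θ₂ s
        ≤ (1 - γ) * (θ₂ s - α⁻¹ * (θ₂ s ^ B * (Sf s / Df s))) := by linarith [h6]
    have h19 := mul_le_mul_of_nonneg_left h18 hC.le
    have h20 : (1 - γ) * (1 - α⁻¹) * θ₂ s ≤ 0 := by
      linarith [mul_nonneg (neg_nonneg.mpr hkey) hy.le]
    have h21 := mul_le_mul_of_nonpos_right (hCle s hs) h20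
    linarith [h19, h21]
  have hθ₂up : ∀ s ∈ Set.Icc t₀ T, θ₂ s ≤ mhjbKap r μ σ ρ₁ ρ₂ γ α T := by
    intro s hs
    have h9 := gron_ge hd2 hup2 s hs
    rw [hT2, one_mul] at h9
    have habs : |c₄ * (s - T)| ≤ |c₄| * T := by
      rw [abs_mul]
      apply mul_le_mul_of_nonneg_left _ (abs_nonneg c₄)
      rw [abs_of_nonpos (by linarith [hs.2] : s - T ≤ 0)]
      linarith [hs.1, ht₀]
    have h10 : c₄ * (s - T) ≤ |c₄| * T := le_trans (le_abs_self _) habs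
    calc θ₂ s ≤ Real.exp (c₄ * (s - T)) := h9
      _ ≤ Real.exp (|c₄| * T) := Real.exp_le_exp.mpr h10
      _ = mhjbKap r μ σ ρ₁ ρ₂ γ α T := by unfold mhjbKap; rw [hc₄val]
  intro t ht
  have l1 := hθ₁low t ht
  have l2 := hord t ht
  have l3 := hθ₂up t ht
  exact ⟨⟨l1, by linarith⟩, ⟨by linarith, l3⟩⟩
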